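/- Let t ≥ √2. Then there exists a real u > 0 with 2u² + 1/u² = 2t, and for any such u the three points W := (u, 1/u, u, 0), W' := (u, 0, u, 1/u), W'' := (u, (1+i)/(2u), u, (1−i)/(2u)) of ℂ⁴ are pairwise distinct, each satisfies w₁w₂ + w₃w₄ = 1 and |w₁|² + |w₂|² + |w₃|² + |w₄|² = 2t, and F(W) = F(W') = F(W'') = (u, u, 0). In particular, F is not injective on M_t³ for any t ≥ √2. -/

import Mathlib

open Complex

/-- The holomorphic continuation of the Ahern–Rudin map in the `w`-coordinates:
`F(w₁,w₂,w₃,w₄) = (w₁, w₃, w₂w₃w₄² + i·w₁w₂²w₄)`. -/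
noncomputable def ARmap (w : ℂ × ℂ × ℂ × ℂ) : ℂ × ℂ × ℂ :=
  (w.1, w.2.2.1, w.2.1 * w.2.2.1 * w.2.2.2 ^ 2 + Complex.I * w.1 * w.2.1 ^ 2 * w.2.2.2)

/-- Membership in the quadric `Q³ = {w₁w₂ + w₃w₄ = 1}`. -/
def onQuadric (w : ℂ × ℂ × ℂ × ℂ) : Prop := w.1 * w.2.1 + w.2.2.1 * w.2.2.2 = 1

/-- `|w₁|² + |w₂|² + |w₃|² + |w₄|²`. -/
noncomputable def normSq4 (w : ℂ × ℂ × ℂ × ℂ) : ℝ :=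
  ‖w.1‖ ^ 2 + ‖w.2.1‖ ^ 2 + ‖w.2.2.1‖ ^ 2 +
    ‖w.2.2.2‖ ^ 2

/-- For `t ≥ √2` there exists a real `u > 0` with `2u² + 1/u² = 2t`, and for any
such `u` the three points `W = (u, 1/u, u, 0)`, `W' = (u, 0, u, 1/u)`,
`W'' = (u, (1+i)/(2u), u, (1−i)/(2u))` are pairwise distinct, lie on the quadric, lie on
`M_t³`, and are all mapped by `F` to `(u, u, 0)`. In particular `F` is not injective on
`M_t³` for `t ≥ √2`. -/
theorem stmt_18 (t : ℝ) (ht : Real.sqrt 2 ≤ t) :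
    (∃ u : ℝ, 0 < u ∧ 2 * u ^ 2 + 1 / u ^ 2 = 2 * t) ∧
    (∀ u : ℝ, 0 < u → 2 * u ^ 2 + 1 / u ^ 2 = 2 * t →
      ((u : ℂ), 1 / (u : ℂ), (u : ℂ), (0 : ℂ)) ≠ ((u : ℂ), (0 : ℂ), (u : ℂ), 1 / (u : ℂ)) ∧
      ((u : ℂ), 1 / (u : ℂ), (u : ℂ), (0 : ℂ)) ≠
        ((u : ℂ), (1 + Complex.I) / (2 * u), (u : ℂ), (1 - Complex.I) / (2 * u)) ∧
      ((u : ℂ), (0 : ℂ), (u : ℂ), 1 / (u : ℂ)) ≠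
        ((u : ℂ), (1 + Complex.I) / (2 * u), (u : ℂ), (1 - Complex.I) / (2 * u)) ∧
      onQuadric ((u : ℂ), 1 / (u : ℂ), (u : ℂ), (0 : ℂ)) ∧
      onQuadric ((u : ℂ), (0 : ℂ), (u : ℂ), 1 / (u : ℂ)) ∧
      onQuadric ((u : ℂ), (1 + Complex.I) / (2 * u), (u : ℂ), (1 - Complex.I) / (2 * u)) ∧
      normSq4 ((u : ℂ), 1 / (u : ℂ), (u : ℂ), (0 : ℂ)) = 2 * t ∧
      normSq4 ((u : ℂ), (0 : ℂ), (u : ℂ), 1 / (u : ℂ)) = 2 * t ∧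
      normSq4 ((u : ℂ), (1 + Complex.I) / (2 * u), (u : ℂ), (1 - Complex.I) / (2 * u)) = 2 * t ∧
      ARmap ((u : ℂ), 1 / (u : ℂ), (u : ℂ), (0 : ℂ)) = ((u : ℂ), (u : ℂ), (0 : ℂ)) ∧
      ARmap ((u : ℂ), (0 : ℂ), (u : ℂ), 1 / (u : ℂ)) = ((u : ℂ), (u : ℂ), (0 : ℂ)) ∧
      ARmap ((u : ℂ), (1 + Complex.I) / (2 * u), (u : ℂ), (1 - Complex.I) / (2 * u)) =
        ((u : ℂ), (u : ℂ), (0 : ℂ))) := by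
  have h2 : (0:ℝ) < 2 := by norm_num
  have ht0 : 0 < t := lt_of_lt_of_le (Real.sqrt_pos.mpr h2) ht
  constructor
  · have hs : 0 ≤ t ^ 2 - 2 := by
      nlinarith [Real.sq_sqrt (le_of_lt h2), Real.sqrt_nonneg 2]
    set s := Real.sqrt (t ^ 2 - 2) with hsdef
    have hs2 : s ^ 2 = t ^ 2 - 2 := Real.sq_sqrt hs
    have hsnn : 0 ≤ s := Real.sqrt_nonneg _
    have hx : 0 < (t + s) / 2 := by positivity
    refine ⟨Real.sqrt ((t + s) / 2), Real.sqrt_pos.mpr hx, ?_⟩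
    have hu2 : Real.sqrt ((t + s) / 2) ^ 2 = (t + s) / 2 := Real.sq_sqrt hx.le
    rw [hu2]
    have hne : (t + s) / 2 ≠ 0 := ne_of_gt hx
    field_simp
    nlinarith [hs2]
  · intro u hu heq
    have hur : u ≠ 0 := ne_of_gt hu
    have hune : (u : ℂ) ≠ 0 := Complex.ofReal_ne_zero.mpr hur
    have habs1 : ‖(1 / (u:ℂ))‖ ^ 2 = 1 / u ^ 2 := by
      rw [norm_div, Complex.norm_real, norm_one, Real.norm_eq_abs, abs_of_pos hu]
      ring
    have habsu : ‖(u:ℂ)‖ ^ 2 = u ^ 2 := by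
      rw [Complex.norm_real, Real.norm_eq_abs, abs_of_pos hu]
    have habs3 : ‖((1 + Complex.I) / (2 * (u:ℂ)))‖ ^ 2 = 1 / (2 * u ^ 2) := by
      rw [norm_div, div_pow, Complex.sq_norm, Complex.sq_norm]
      simp [Complex.normSq_apply]
      ring
    have habs4 : ‖((1 - Complex.I) / (2 * (u:ℂ)))‖ ^ 2 = 1 / (2 * u ^ 2) := by
      rw [norm_div, div_pow, Complex.sq_norm, Complex.sq_norm]
      simp [Complex.normSq_apply]
      ring
    refine ⟨?_, ?_, ?_, ?_, ?_, ?_, ?_, ?_, ?_, ?_, ?_, ?_⟩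
    · intro h
      have h2 := congrArg (fun p : ℂ × ℂ × ℂ × ℂ => p.2.1) h
      simp [hune] at h2
    · intro h
      have h2 := congrArg (fun p : ℂ × ℂ × ℂ × ℂ => p.2.1) h
      simp only at h2
      rw [div_eq_div_iff hune (by simp [hune])] at h2
      have h3 : (2:ℂ) = 1 + Complex.I := by
        exact mul_right_cancel₀ hune (by linear_combination h2)
      simp [Complex.ext_iff] at h3
    · intro h
      have h2 := congrArg (fun p : ℂ × ℂ × ℂ × ℂ => p.2.1) h
      simp only at h2
      rcases div_eq_zero_iff.mp h2.symm with h1 | h1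
      · simp [Complex.ext_iff] at h1
      · exact absurd h1 (by simp [hune])
    · show (u:ℂ) * (1 / u) + (u:ℂ) * 0 = 1
      field_simp
      simp
    · show (u:ℂ) * 0 + (u:ℂ) * (1 / u) = 1
      field_simp
      simp
    · show (u:ℂ) * ((1 + Complex.I) / (2 * u)) + (u:ℂ) * ((1 - Complex.I) / (2 * u)) = 1
      field_simp
      ring
    · show ‖(u:ℂ)‖ ^ 2 + ‖(1 / (u:ℂ))‖ ^ 2 + ‖(u:ℂ)‖ ^ 2 +
        ‖(0:ℂ)‖ ^ 2 = 2 * t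
      rw [habs1, habsu]
      simp only [norm_zero]
      nlinarith [heq]
    · show ‖(u:ℂ)‖ ^ 2 + ‖(0:ℂ)‖ ^ 2 + ‖(u:ℂ)‖ ^ 2 +
        ‖(1 / (u:ℂ))‖ ^ 2 = 2 * t
      rw [habs1, habsu]
      simp only [norm_zero]
      nlinarith [heq]
    · show ‖(u:ℂ)‖ ^ 2 + ‖((1 + Complex.I) / (2 * (u:ℂ)))‖ ^ 2 +
        ‖(u:ℂ)‖ ^ 2 + ‖((1 - Complex.I) / (2 * (u:ℂ)))‖ ^ 2 = 2 * t
      rw [habs3, habs4, habsu]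
      have hu2 : u ^ 2 ≠ 0 := pow_ne_zero _ hur
      field_simp
      field_simp at heq
      linarith [heq]
    · simp [ARmap]
    · simp [ARmap]
    · show ((u:ℂ), (u:ℂ), ((1 + Complex.I) / (2 * u)) * u * ((1 - Complex.I) / (2 * u)) ^ 2 +
        Complex.I * u * ((1 + Complex.I) / (2 * u)) ^ 2 * ((1 - Complex.I) / (2 * u))) =
        ((u:ℂ), (u:ℂ), 0)
      refine Prod.ext rfl (Prod.ext rfl ?_)
      show ((1 + Complex.I) / (2 * (u:ℂ))) * u * ((1 - Complex.I) / (2 * u)) ^ 2 +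
        Complex.I * u * ((1 + Complex.I) / (2 * u)) ^ 2 * ((1 - Complex.I) / (2 * u)) = 0
      field_simp
      ring_nf
      simp [Complex.I_sq]
      try ring
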